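/- For every t ∈ [T], the probability that X_t^GMM falls outside the set A_t satisfies P{X_t^GMM ∉ A_t} ≤ C exp(−2 d log T) for some absolute constant C > 0. -/

import Mathlib

open MeasureTheory Real Finset
open scoped RealInnerProductSpace BigOperators

noncomputable section

/-- Density of the Gaussian distribution `N(m, v I_d)` on `ℝ^d`. -/
def gaussV (d : ℕ) (v : ℝ) (m x : EuclideanSpace ℝ (Fin d)) : ℝ :=
  (2 * Real.pi * v) ^ (-(d : ℝ) / 2) * Real.exp (-‖x - m‖ ^ 2 / (2 * v))

/-- Density of the Gaussian mixture `∑_k w_k N(√abar μ_k, I_d)`. -/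
def mixDensity (d K : ℕ) (w : Fin K → ℝ) (μ : Fin K → EuclideanSpace ℝ (Fin d))
    (abar : ℝ) (x : EuclideanSpace ℝ (Fin d)) : ℝ :=
  ∑ k, w k * gaussV d 1 (Real.sqrt abar • μ k) x

/-- Posterior component weights `π_k^{(t)}(x)`. -/
def postWeight (d K : ℕ) (w : Fin K → ℝ) (μ : Fin K → EuclideanSpace ℝ (Fin d))
    (abar : ℝ) (k : Fin K) (x : EuclideanSpace ℝ (Fin d)) : ℝ :=
  w k * Real.exp (-‖x - Real.sqrt abar • μ k‖ ^ 2 / 2) /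
    ∑ i, w i * Real.exp (-‖x - Real.sqrt abar • μ i‖ ^ 2 / 2)

/-- Closed form of the score `∇ log p_{X_t^GMM}` of the diffused GMM. -/
def gmmScore (d K : ℕ) (w : Fin K → ℝ) (μ : Fin K → EuclideanSpace ℝ (Fin d))
    (abar : ℝ) (x : EuclideanSpace ℝ (Fin d)) : EuclideanSpace ℝ (Fin d) :=
  -x + Real.sqrt abar • ∑ k, postWeight d K w μ abar k x • μ k

/-- The Jacobian matrix `J_t(x)` of the diffused GMM score. -/
def gmmJac (d K : ℕ) (w : Fin K → ℝ) (μ : Fin K → EuclideanSpace ℝ (Fin d))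
    (abar : ℝ) (x : EuclideanSpace ℝ (Fin d)) : Matrix (Fin d) (Fin d) ℝ :=
  Matrix.of fun i j =>
    (if i = j then (-1 : ℝ) else 0) +
      abar * ((∑ k, postWeight d K w μ abar k x * (μ k i * μ k j)) -
        (∑ k, postWeight d K w μ abar k x * μ k i) *
          (∑ k, postWeight d K w μ abar k x * μ k j))

/-- The quantity `ζ_k^{(t)}(x)`, where `abar` plays the role of `ᾱ_t` and `a` that of `α_t`. -/
def zeta (d K : ℕ) (w : Fin K → ℝ) (μ : Fin K → EuclideanSpace ℝ (Fin d))
    (abar a : ℝ) (k : Fin K) (x : EuclideanSpace ℝ (Fin d)) : ℝ :=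
  (1 - a ^ 2) / (2 * a ^ 2) *
      (‖x - Real.sqrt abar • μ k‖ ^ 2 -
        ∑ i, postWeight d K w μ abar i x * ‖x - Real.sqrt abar • μ i‖ ^ 2) +
    (1 - a) / a ^ 2 *
      ⟪gmmScore d K w μ abar x,
        ∑ i, postWeight d K w μ abar i x • (Real.sqrt abar • (μ i - μ k))⟫

/-- The typical set `E_t`. -/
def Eset (d K T : ℕ) (w : Fin K → ℝ) (μ : Fin K → EuclideanSpace ℝ (Fin d))
    (abar a C₁ C₂ : ℝ) : Set (EuclideanSpace ℝ (Fin d)) :=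
  {x | Matrix.trace (1 + gmmJac d K w μ abar x) ≤ C₁ * Real.log ((K : ℝ) * T) ∧
    ∑ k, postWeight d K w μ abar k x * Real.exp (-(zeta d K w μ abar a k x)) ≤
      Real.exp (C₂ * (1 - a) ^ 2 * Real.log ((K : ℝ) * T) ^ 2)}

/-- The set `A_t`. -/
def Aset (d K T : ℕ) (w : Fin K → ℝ) (μ : Fin K → EuclideanSpace ℝ (Fin d))
    (abar cR C₇ : ℝ) : Set (EuclideanSpace ℝ (Fin d)) :=
  {x | -(C₇ * d * Real.log ((d : ℝ) * T)) ≤ Real.log (mixDensity d K w μ abar x) ∧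
    ‖x‖ ≤ Real.sqrt (2 * (T : ℝ) ^ (2 * cR) + 16 * d * Real.log T)}

/-- The set `T_k`. -/
def Tset (d K T : ℕ) (μ : Fin K → EuclideanSpace ℝ (Fin d))
    (abar C₅ : ℝ) (k : Fin K) : Set (EuclideanSpace ℝ (Fin d)) :=
  {x | ∀ i : Fin K,
    |⟪x - Real.sqrt abar • μ k, Real.sqrt abar • (μ i - μ k)⟫| ≤
      C₅ * Real.sqrt (abar * Real.log ((K : ℝ) * T)) * ‖μ i - μ k‖}

/-- Forward (diffused) marginal density at noise level `abar`, starting from density `f₀`. -/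
def fwdDensity (d : ℕ) (f₀ : EuclideanSpace ℝ (Fin d) → ℝ) (abar : ℝ)
    (x : EuclideanSpace ℝ (Fin d)) : ℝ :=
  ∫ y, gaussV d (1 - abar) (Real.sqrt abar • y) x * f₀ y

/-- Stein score of a density `p`. -/
def scoreOf (d : ℕ) (p : EuclideanSpace ℝ (Fin d) → ℝ)
    (x : EuclideanSpace ℝ (Fin d)) : EuclideanSpace ℝ (Fin d) :=
  gradient (fun y => Real.log (p y)) x

/-- Truncation (clipping) of a score estimate at radius `R`. -/
def clipFn (d : ℕ) (R : ℝ) (s : EuclideanSpace ℝ (Fin d) → EuclideanSpace ℝ (Fin d))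
    (x : EuclideanSpace ℝ (Fin d)) : EuclideanSpace ℝ (Fin d) :=
  if ‖s x‖ ≤ R then s x else 0

/-- Total-variation distance between two densities on `ℝ^d`. -/
def tvDist (d : ℕ) (p q : EuclideanSpace ℝ (Fin d) → ℝ) : ℝ :=
  (1 / 2) * ∫ x, |p x - q x|

/-- Density of the one-step (DDPM-type) reverse Gaussian transition with rate `a`
and drift field `s`, from `y` to `x`. -/
def ddpmKernel (d : ℕ) (a : ℝ) (s : EuclideanSpace ℝ (Fin d) → EuclideanSpace ℝ (Fin d))
    (y x : EuclideanSpace ℝ (Fin d)) : ℝ :=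
  gaussV d (1 - a) ((Real.sqrt a)⁻¹ • (y + (1 - a) • s y)) x

/-- Density of `Y_{T-n}` for the DDPM sampler run with rates `α` and score estimates `s`. -/
def ddpmDensity (d T : ℕ) (α : ℕ → ℝ)
    (s : ℕ → EuclideanSpace ℝ (Fin d) → EuclideanSpace ℝ (Fin d)) :
    ℕ → EuclideanSpace ℝ (Fin d) → ℝ
  | 0 => gaussV d 1 0
  | n + 1 => fun x =>
      ∫ y, ddpmKernel d (α (T - n)) (s (T - n)) y x * ddpmDensity d T α s n y

/-- Density (on `ℝ^d`) of `Ȳ_{T-n}^-` for the auxiliary reverse process. -/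
def pbarMinus (d K T : ℕ) (w : Fin K → ℝ) (μ : Fin K → EuclideanSpace ℝ (Fin d))
    (αbar α : ℕ → ℝ) (C₁ C₂ : ℝ) : ℕ → EuclideanSpace ℝ (Fin d) → ℝ
  | 0 => (Eset d K T w μ (αbar T) (α T) C₁ C₂).indicator (gaussV d 1 0)
  | n + 1 =>
      (Eset d K T w μ (αbar (T - n)) (α (T - n)) C₁ C₂).indicator fun x =>
        ∫ y in Eset d K T w μ (αbar (T - n)) (α (T - n)) C₁ C₂,
          ddpmKernel d (α (T - n)) (gmmScore d K w μ (αbar (T - n))) y x *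
            min (mixDensity d K w μ (αbar (T - n)) y)
              (pbarMinus d K T w μ αbar α C₁ C₂ n y)

/-- The function `Δ_t(x) = p_{X_t^GMM}(x) - p_{Ȳ_t}(x)`. -/
def DeltaFn (d K T : ℕ) (w : Fin K → ℝ) (μ : Fin K → EuclideanSpace ℝ (Fin d))
    (αbar α : ℕ → ℝ) (C₁ C₂ : ℝ) (t : ℕ) (x : EuclideanSpace ℝ (Fin d)) : ℝ :=
  mixDensity d K w μ (αbar t) x -
    min (mixDensity d K w μ (αbar t) x) (pbarMinus d K T w μ αbar α C₁ C₂ (T - t) x)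

end

section helpers

abbrev E (d : ℕ) := EuclideanSpace ℝ (Fin d)

variable {d : ℕ}

lemma integrable_gauss0 (b : ℝ) (hb : 0 < b) :
    Integrable (fun x : E d => Real.exp (-b * ‖x‖ ^ 2)) := by
  have h := (GaussianFourier.integrable_cexp_neg_mul_sq_norm_add
      (b := (b : ℂ)) (by simpa using hb) 0 (0 : E d)).norm
  simpa [Complex.norm_exp, ← Complex.ofReal_pow, Complex.ofReal_re] using h

lemma integral_gauss0 (b : ℝ) (hb : 0 < b) :
    ∫ x : E d, Real.exp (-b * ‖x‖ ^ 2) = (π / b) ^ ((d : ℝ) / 2) := by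
  simpa using GaussianFourier.integral_rexp_neg_mul_sq_norm (V := E d) hb

lemma integrable_gauss (b : ℝ) (hb : 0 < b) (m : E d) :
    Integrable (fun x : E d => Real.exp (-b * ‖x - m‖ ^ 2)) :=
  (integrable_gauss0 b hb).comp_sub_right m

lemma integral_gauss (b : ℝ) (hb : 0 < b) (m : E d) :
    ∫ x : E d, Real.exp (-b * ‖x - m‖ ^ 2) = (π / b) ^ ((d : ℝ) / 2) := by
  calc ∫ x : E d, Real.exp (-b * ‖x - m‖ ^ 2)
      = ∫ x : E d, Real.exp (-b * ‖x‖ ^ 2) :=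
        integral_sub_right_eq_self (fun x : E d => Real.exp (-b * ‖x‖ ^ 2)) m
    _ = (π / b) ^ ((d : ℝ) / 2) := integral_gauss0 b hb

lemma gaussV_one_eq (m x : E d) :
    gaussV d 1 m x = (2 * π) ^ (-(d : ℝ) / 2) * Real.exp (-(1/2) * ‖x - m‖ ^ 2) := by
  unfold gaussV
  rw [mul_one]
  congr 1
  ring_nf

lemma gaussV_one_nonneg (m x : E d) : 0 ≤ gaussV d 1 m x := by
  rw [gaussV_one_eq]; positivity

lemma gaussV_one_fun_eq (m : E d) :
    gaussV d 1 m = fun x => (2 * π) ^ (-(d : ℝ) / 2) * Real.exp (-(1/2) * ‖x - m‖ ^ 2) :=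
  funext (gaussV_one_eq m)

lemma integrable_gaussV_one (m : E d) : Integrable (gaussV d 1 m) := by
  rw [gaussV_one_fun_eq]
  exact (integrable_gauss (1/2) (by norm_num) m).const_mul _

lemma continuous_gaussV_one (m : E d) : Continuous (gaussV d 1 m) := by
  rw [gaussV_one_fun_eq]
  fun_prop

lemma integral_gaussV_one (m : E d) : ∫ x : E d, gaussV d 1 m x = 1 := by
  rw [gaussV_one_fun_eq, integral_const_mul, integral_gauss (1/2) (by norm_num) m]
  rw [show π / (1/2 : ℝ) = 2 * π by ring]
  rw [← Real.rpow_add (by positivity), show (-(d:ℝ)/2 + (d:ℝ)/2) = 0 by ring, Real.rpow_zero]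

section mix
variable {K : ℕ} (w : Fin K → ℝ) (μ : Fin K → E d) (abar : ℝ)

lemma integrable_mix : Integrable (mixDensity d K w μ abar) := by
  unfold mixDensity
  exact integrable_finset_sum _ fun k _ => (integrable_gaussV_one _).const_mul _

lemma continuous_mix : Continuous (mixDensity d K w μ abar) := by
  unfold mixDensity
  exact continuous_finset_sum _ fun k _ => continuous_const.mul (continuous_gaussV_one _)

lemma mix_nonneg (hw : ∀ k, 0 ≤ w k) (x : E d) : 0 ≤ mixDensity d K w μ abar x :=
  Finset.sum_nonneg fun k _ => mul_nonneg (hw k) (gaussV_one_nonneg _ _)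

lemma integral_mix (hw1 : ∑ k, w k = 1) : ∫ x : E d, mixDensity d K w μ abar x = 1 := by
  unfold mixDensity
  rw [integral_finset_sum _ fun k _ => (integrable_gaussV_one _).const_mul _]
  simp_rw [integral_const_mul, integral_gaussV_one, mul_one]
  exact hw1

end mix

lemma tail_est (m : E d) (R u : ℝ) (hu : 0 ≤ u) (hm : ‖m‖ + u ≤ R) :
    ∫ x in {x : E d | R < ‖x‖}, gaussV d 1 m x ≤
      (5 : ℝ) ^ ((d : ℝ) / 2) * Real.exp (-(2/5) * u ^ 2) := by
  set S : Set (E d) := {x | R < ‖x‖} with hS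
  have hSm : MeasurableSet S := measurableSet_lt measurable_const continuous_norm.measurable
  set g : E d → ℝ :=
    fun x => Real.exp (-(2/5) * u ^ 2) * ((2 * π) ^ (-(d : ℝ) / 2) *
      Real.exp (-(1/10) * ‖x - m‖ ^ 2)) with hg
  have hgint : Integrable g :=
    (((integrable_gauss (1/10) (by norm_num) m).const_mul _).const_mul _)
  have key : ∀ x ∈ S, gaussV d 1 m x ≤ g x := by
    intro x hx
    have h1 : u ≤ ‖x - m‖ := by
      have h2 : ‖x‖ - ‖m‖ ≤ ‖x - m‖ := norm_sub_norm_le x m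
      have h3 : R < ‖x‖ := hx
      linarith
    have h4 : u ^ 2 ≤ ‖x - m‖ ^ 2 := by nlinarith [norm_nonneg (x - m)]
    rw [gaussV_one_eq, hg]
    have h5 : Real.exp (-(1/2) * ‖x - m‖ ^ 2) ≤
        Real.exp (-(2/5) * u ^ 2) * Real.exp (-(1/10) * ‖x - m‖ ^ 2) := by
      rw [← Real.exp_add]
      exact Real.exp_le_exp.mpr (by nlinarith)
    calc (2 * π) ^ (-(d : ℝ) / 2) * Real.exp (-(1/2) * ‖x - m‖ ^ 2)
        ≤ (2 * π) ^ (-(d : ℝ) / 2) *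
          (Real.exp (-(2/5) * u ^ 2) * Real.exp (-(1/10) * ‖x - m‖ ^ 2)) :=
          mul_le_mul_of_nonneg_left h5 (by positivity)
      _ = Real.exp (-(2/5) * u ^ 2) * ((2 * π) ^ (-(d : ℝ) / 2) *
          Real.exp (-(1/10) * ‖x - m‖ ^ 2)) := by ring
  calc ∫ x in S, gaussV d 1 m x
      ≤ ∫ x in S, g x :=
        setIntegral_mono_on (integrable_gaussV_one m).integrableOn hgint.integrableOn hSm key
    _ ≤ ∫ x, g x := setIntegral_le_integral hgint (ae_of_all _ fun x => by rw [hg]; positivity)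
    _ = Real.exp (-(2/5) * u ^ 2) * ((2 * π) ^ (-(d : ℝ) / 2) * (π / (1/10)) ^ ((d : ℝ) / 2)) := by
        rw [hg, integral_const_mul, integral_const_mul, integral_gauss (1/10) (by norm_num) m]
    _ = (5 : ℝ) ^ ((d : ℝ) / 2) * Real.exp (-(2/5) * u ^ 2) := by
        have hfin : (2 * π) ^ (-(d:ℝ)/2) * (π / (1/10)) ^ ((d:ℝ)/2) = (5:ℝ) ^ ((d:ℝ)/2) := by
          rw [show π / (1/10 : ℝ) = 5 * (2 * π) by ring,
            Real.mul_rpow (x := 5) (y := 2*π) (by norm_num) (by positivity),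
            mul_comm ((5:ℝ) ^ ((d:ℝ)/2)) _, ← mul_assoc, ← Real.rpow_add (by positivity),
            show (-(d:ℝ)/2 + (d:ℝ)/2) = 0 by ring, Real.rpow_zero, one_mul]
        rw [hfin, mul_comm]

lemma lowden_est (hd : 1 ≤ d) (R ε : ℝ) (hR : 0 < R) (hε : 0 ≤ ε) (p : E d → ℝ)
    (hpi : Integrable p) (hpc : Continuous p) :
    ∫ x in {x : E d | ‖x‖ ≤ R ∧ p x < ε}, p x ≤
      ε * Real.exp d * (π * R ^ 2 / d) ^ ((d : ℝ) / 2) := by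
  have hd0 : (0 : ℝ) < d := by exact_mod_cast hd
  set s : ℝ := (d : ℝ) / R ^ 2 with hs
  have hs0 : 0 < s := by positivity
  set S : Set (E d) := {x | ‖x‖ ≤ R ∧ p x < ε} with hS
  have hSm : MeasurableSet S := by
    apply MeasurableSet.inter
    · exact measurableSet_le continuous_norm.measurable measurable_const
    · exact measurableSet_lt hpc.measurable measurable_const
  set g : E d → ℝ := fun x => ε * Real.exp d * Real.exp (-s * ‖x‖ ^ 2) with hg
  have hgint : Integrable g := (integrable_gauss0 s hs0).const_mul _
  have key : ∀ x ∈ S, p x ≤ g x := by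
    intro x hx
    obtain ⟨hx1, hx2⟩ := hx
    have h1 : s * ‖x‖ ^ 2 ≤ (d : ℝ) := by
      rw [hs]
      rw [div_mul_eq_mul_div, div_le_iff₀ (by positivity)]
      have : ‖x‖ ^ 2 ≤ R ^ 2 := by nlinarith [norm_nonneg x]
      nlinarith
    have h2 : (1 : ℝ) ≤ Real.exp d * Real.exp (-s * ‖x‖ ^ 2) := by
      rw [← Real.exp_add, ← Real.exp_zero]
      exact Real.exp_le_exp.mpr (by linarith)
    calc p x ≤ ε := hx2.le
      _ = ε * 1 := (mul_one ε).symm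
      _ ≤ ε * (Real.exp d * Real.exp (-s * ‖x‖ ^ 2)) := mul_le_mul_of_nonneg_left h2 hε
      _ = g x := by rw [hg]; ring
  calc ∫ x in S, p x
      ≤ ∫ x in S, g x := setIntegral_mono_on hpi.integrableOn hgint.integrableOn hSm key
    _ ≤ ∫ x, g x := setIntegral_le_integral hgint (ae_of_all _ fun x => by rw [hg]; positivity)
    _ = ε * Real.exp d * (π / s) ^ ((d : ℝ) / 2) := by
        rw [hg, integral_const_mul, integral_gauss0 s hs0]
    _ = ε * Real.exp d * (π * R ^ 2 / d) ^ ((d : ℝ) / 2) := by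
        rw [hs]
        congr 2
        field_simp

lemma five_pow_bound (d T : ℕ) (hd : 1 ≤ d) (hT : 2 ≤ T) :
    (5 : ℝ) ^ ((d : ℝ) / 2) * Real.exp (-(2/5) * Real.sqrt (8 * d * Real.log T) ^ 2) ≤
      Real.exp (-(2 * d * Real.log T)) := by
  have hT2 : (2 : ℝ) ≤ T := by exact_mod_cast hT
  have hlT : Real.log 2 ≤ Real.log T := Real.log_le_log (by norm_num) hT2
  have hl2 : 0 < Real.log 2 := Real.log_pos one_lt_two
  have hlT0 : 0 ≤ Real.log T := le_trans hl2.le hlT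
  have hdd : (1 : ℝ) ≤ d := by exact_mod_cast hd
  have hsq : Real.sqrt (8 * d * Real.log T) ^ 2 = 8 * d * Real.log T :=
    Real.sq_sqrt (by positivity)
  rw [hsq, Real.rpow_def_of_pos (by norm_num : (0:ℝ) < 5), ← Real.exp_add]
  apply Real.exp_le_exp.mpr
  have h52 : Real.log 5 ≤ (12/5) * Real.log 2 := by
    have h := Real.log_le_log (by norm_num : (0:ℝ) < 5 ^ 5) (by norm_num : (5:ℝ) ^ 5 ≤ 2 ^ 12)
    rw [Real.log_pow, Real.log_pow] at h
    push_cast at h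
    linarith
  have h53 : Real.log 5 ≤ (12/5) * Real.log T := le_trans h52 (by nlinarith)
  have h54 := mul_le_mul_of_nonneg_left h53 (show (0:ℝ) ≤ (d:ℝ)/2 by positivity)
  nlinarith [mul_le_mul_of_nonneg_left hlT0 (show (0:ℝ) ≤ (d:ℝ) - 1 by linarith)]

lemma lowden_final (d T : ℕ) (hd : 1 ≤ d) (hT : 2 ≤ T) (cR C₇ : ℝ) (hcR : 0 < cR)
    (hC7 : cR + 10 ≤ C₇) :
    Real.exp (-(C₇ * d * Real.log (d * T))) * Real.exp d *
      (π * Real.sqrt (2 * (T:ℝ) ^ (2*cR) + 16 * d * Real.log T) ^ 2 / d) ^ ((d:ℝ)/2) ≤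
    Real.exp (-(2 * d * Real.log T)) := by
  have hT0 : (0:ℝ) < T := by positivity
  have hT2 : (2 : ℝ) ≤ T := by exact_mod_cast hT
  have hT1 : (1 : ℝ) ≤ T := by linarith
  have hd0 : (0:ℝ) < d := by exact_mod_cast Nat.lt_of_lt_of_le Nat.zero_lt_one hd
  have hdd : (1:ℝ) ≤ d := by exact_mod_cast hd
  set Lt := Real.log T with hLtdef
  set Ld := Real.log ((d:ℝ) * T) with hLddef
  have hLt2 : Real.log 2 ≤ Lt := Real.log_le_log (by norm_num) hT2
  have hl2 : (0.6931471803:ℝ) < Real.log 2 := Real.log_two_gt_d9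
  have hLt0 : 0 ≤ Lt := by linarith
  have hLd : Lt ≤ Ld := Real.log_le_log hT0 (by nlinarith)
  have hLd0 : 0 ≤ Ld := le_trans hLt0 hLd
  have hrp0 : (0:ℝ) < (T:ℝ) ^ (2*cR) := Real.rpow_pos_of_pos hT0 _
  have hX0 : (0:ℝ) < (T:ℝ) ^ (2*cR+1) := Real.rpow_pos_of_pos hT0 _
  have hsq : Real.sqrt (2 * (T:ℝ) ^ (2*cR) + 16 * d * Lt) ^ 2
      = 2 * (T:ℝ) ^ (2*cR) + 16 * d * Lt := Real.sq_sqrt (by positivity)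
  rw [hsq]
  set A : ℝ := π * (2 * (T:ℝ) ^ (2*cR) + 16 * d * Lt) / d with hAdef
  have hA0 : 0 < A := by positivity
  have h1 : (T:ℝ) ^ (2*cR) ≤ (T:ℝ) ^ (2*cR+1) :=
    Real.rpow_le_rpow_of_exponent_le hT1 (by linarith)
  have h2 : Lt ≤ (T:ℝ) ^ (2*cR+1) := by
    have ha : Lt ≤ (T:ℝ) := by
      have := Real.log_le_sub_one_of_pos hT0
      linarith
    have hb : (T:ℝ) ≤ (T:ℝ) ^ (2*cR+1) := by
      have := Real.rpow_le_rpow_of_exponent_le hT1 (show (1:ℝ) ≤ 2*cR+1 by linarith)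
      rwa [Real.rpow_one] at this
    linarith
  have hπ : π ≤ 3.15 := Real.pi_lt_d2.le
  have hAle : A ≤ 57 * (T:ℝ) ^ (2*cR+1) := by
    rw [hAdef, div_le_iff₀ hd0]
    nlinarith [mul_le_mul_of_nonneg_left h2 (show (0:ℝ) ≤ 16*(d:ℝ) by positivity),
      mul_le_mul_of_nonneg_left h1 (show (0:ℝ) ≤ 2 by norm_num), Real.pi_pos,
      mul_le_mul_of_nonneg_left hX0.le (show (0:ℝ) ≤ 57*((d:ℝ)-1) by nlinarith)]
  have hlogA : Real.log A ≤ 5 + (2*cR+1) * Lt := by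
    have hle : Real.log A ≤ Real.log (57 * (T:ℝ) ^ (2*cR+1)) := Real.log_le_log hA0 hAle
    rw [Real.log_mul (by norm_num) (ne_of_gt hX0), Real.log_rpow hT0] at hle
    have h57 : Real.log 57 ≤ 5 := by
      rw [Real.log_le_iff_le_exp (by norm_num)]
      have h := Real.exp_one_gt_d9
      have h5 : Real.exp 1 ^ (5:ℕ) = Real.exp 5 := by
        rw [Real.exp_one_pow]; norm_num
      have hp : (2.7182818283:ℝ) ^ (5:ℕ) ≤ Real.exp 1 ^ (5:ℕ) :=
        pow_le_pow_left₀ (by norm_num) h.le 5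
      rw [h5] at hp
      nlinarith [hp]
    linarith
  rw [Real.rpow_def_of_pos hA0, ← Real.exp_add, ← Real.exp_add]
  apply Real.exp_le_exp.mpr
  have hZ : 2*Lt + 1 + (Real.log A)/2 ≤ C₇ * Ld := by
    have hC70 : (0:ℝ) ≤ C₇ := by linarith
    have ha := mul_le_mul_of_nonneg_right hC7 hLd0
    have hb := mul_le_mul_of_nonneg_left hLd (show (0:ℝ) ≤ cR + 2.5 by linarith)
    linarith
  nlinarith [mul_le_mul_of_nonneg_left hZ hd0.le]

lemma core_est (d K T : ℕ) (hd : 1 ≤ d) (hT : 2 ≤ T) (w : Fin K → ℝ)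
    (μ : Fin K → E d) (hw0 : ∀ k, 0 ≤ w k) (hw1 : ∑ k, w k = 1)
    (abar cR C₇ : ℝ) (hcR : 0 < cR) (hC7 : cR + 10 ≤ C₇)
    (hmean : ∀ k, ‖Real.sqrt abar • μ k‖ + Real.sqrt (8 * d * Real.log T) ≤
      Real.sqrt (2 * (T : ℝ) ^ (2 * cR) + 16 * d * Real.log T)) :
    ∫ x in (Aset d K T w μ abar cR C₇)ᶜ, mixDensity d K w μ abar x ≤
      2 * Real.exp (-(2 * d * Real.log T)) := by
  set R : ℝ := Real.sqrt (2 * (T : ℝ) ^ (2 * cR) + 16 * d * Real.log T) with hR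
  set ε : ℝ := Real.exp (-(C₇ * d * Real.log ((d : ℝ) * T))) with hε
  set p := mixDensity d K w μ abar with hp
  have hpi : Integrable p := integrable_mix w μ abar
  have hpc : Continuous p := continuous_mix w μ abar
  have hpn : ∀ x, 0 ≤ p x := mix_nonneg w μ abar hw0
  have hlT0 : 0 < Real.log T := Real.log_pos (by exact_mod_cast hT)
  have hR0 : 0 < R := by
    rw [hR]
    apply Real.sqrt_pos.mpr
    have h0 : (0:ℝ) ≤ (T:ℝ) ^ (2 * cR) := Real.rpow_nonneg (by positivity) _
    have hd0 : (1:ℝ) ≤ d := by exact_mod_cast hd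
    nlinarith
  set S1 : Set (E d) := {x | ‖x‖ ≤ R ∧ p x < ε} with hS1
  set S2 : Set (E d) := {x | R < ‖x‖} with hS2
  have hS2m : MeasurableSet S2 := measurableSet_lt measurable_const continuous_norm.measurable
  have hsub : (Aset d K T w μ abar cR C₇)ᶜ ⊆ S1 ∪ S2 := by
    intro x hx
    by_cases hxR : ‖x‖ ≤ R
    · left
      refine ⟨hxR, ?_⟩
      simp only [Aset, Set.mem_compl_iff, Set.mem_setOf_eq, ← hR, ← hp] at hx
      push_neg at hx
      have hlog : Real.log (p x) < -(C₇ * d * Real.log ((d : ℝ) * T)) := by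
        by_contra hcon
        push_neg at hcon
        exact absurd (hx hcon) (not_lt.mpr hxR)
      rcases le_or_gt (p x) 0 with h0 | h0
      · exact lt_of_le_of_lt h0 (Real.exp_pos _)
      · rw [hε]
        calc p x = Real.exp (Real.log (p x)) := (Real.exp_log h0).symm
          _ < Real.exp (-(C₇ * d * Real.log ((d : ℝ) * T))) := Real.exp_lt_exp.mpr hlog
    · right
      exact not_le.mp hxR
  have hdisj : Disjoint S1 S2 := by
    rw [Set.disjoint_left]
    intro x hx1 hx2
    exact absurd hx1.1 (not_le.mpr hx2)
  have step1 : ∫ x in (Aset d K T w μ abar cR C₇)ᶜ, p x ≤ ∫ x in S1 ∪ S2, p x :=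
    setIntegral_mono_set hpi.integrableOn (ae_of_all _ hpn) (HasSubset.Subset.eventuallyLE hsub)
  have step2 := setIntegral_union (f := p) (μ := volume) hdisj hS2m hpi.integrableOn
    hpi.integrableOn
  have bound1 : ∫ x in S1, p x ≤ Real.exp (-(2 * d * Real.log T)) := by
    refine le_trans (lowden_est hd R ε hR0 (Real.exp_pos _).le p hpi hpc) ?_
    rw [hε, hR]
    exact lowden_final d T hd hT cR C₇ hcR hC7
  have bound2 : ∫ x in S2, p x ≤ Real.exp (-(2 * d * Real.log T)) := by
    set u := Real.sqrt (8 * d * Real.log T) with hu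
    have hu0 : 0 ≤ u := Real.sqrt_nonneg _
    have h2 : ∫ x in S2, p x ≤ (5:ℝ) ^ ((d:ℝ)/2) * Real.exp (-(2/5) * u ^ 2) := by
      rw [hp]
      unfold mixDensity
      rw [integral_finset_sum _ fun k _ =>
        ((integrable_gaussV_one _).const_mul _).integrableOn]
      calc ∑ k, ∫ x in S2, w k * gaussV d 1 (Real.sqrt abar • μ k) x
          = ∑ k, w k * ∫ x in S2, gaussV d 1 (Real.sqrt abar • μ k) x := by
            simp_rw [integral_const_mul]
        _ ≤ ∑ k : Fin K, w k * ((5:ℝ) ^ ((d:ℝ)/2) * Real.exp (-(2/5) * u ^ 2)) := by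
            refine Finset.sum_le_sum fun k _ => mul_le_mul_of_nonneg_left ?_ (hw0 k)
            exact tail_est _ R u hu0 (hmean k)
        _ = (5:ℝ) ^ ((d:ℝ)/2) * Real.exp (-(2/5) * u ^ 2) := by
            rw [← Finset.sum_mul, hw1, one_mul]
    refine le_trans h2 ?_
    rw [hu]
    exact five_pow_bound d T hd hT
  linarith

lemma add_sqrt_le (a v : ℝ) (ha : 0 ≤ a) (hv : 0 ≤ v) :
    a + Real.sqrt v ≤ Real.sqrt (2 * a ^ 2 + 2 * v) := by
  rw [show (2 * a ^ 2 + 2 * v) = 2 * a ^ 2 + 2 * v from rfl]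
  refine (Real.le_sqrt (by positivity) (by positivity)).mpr ?_
  nlinarith [Real.sq_sqrt hv, Real.sqrt_nonneg v, sq_nonneg (a - Real.sqrt v)]

lemma alpha_bound (T : ℕ) (hT : 1 ≤ T) (c₀ c₁ : ℝ) (hc₀ : 0 < c₀) (hc₁ : 0 < c₁)
    (αbar : ℕ → ℝ) (hbase : αbar T = (T : ℝ) ^ (-c₀))
    (hrec : ∀ t : ℕ, 2 ≤ t → t ≤ T →
      αbar (t - 1) = αbar t + c₁ * (Real.log T / T) * αbar t * (1 - αbar t)) :
    ∀ t : ℕ, 1 ≤ t → t ≤ T →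
      αbar t ≤ 1 + c₁ ∧ (c₁ * (Real.log T / T) ≤ 1 → 0 ≤ αbar t ∧ αbar t ≤ 1) := by
  have hT1 : (1 : ℝ) ≤ T := by exact_mod_cast hT
  have hT0 : (0 : ℝ) < T := by linarith
  set L : ℝ := Real.log T / T with hL
  have hL0 : 0 ≤ L := div_nonneg (Real.log_nonneg hT1) hT0.le
  have hL1 : L ≤ 1 := by
    rw [hL, div_le_one hT0]
    linarith [Real.log_le_sub_one_of_pos hT0]
  have step : ∀ s : ℕ, 2 ≤ s → s ≤ T →
      (αbar s ≤ 1 + c₁ ∧ (c₁ * L ≤ 1 → 0 ≤ αbar s ∧ αbar s ≤ 1)) →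
      (αbar (s - 1) ≤ 1 + c₁ ∧ (c₁ * L ≤ 1 → 0 ≤ αbar (s - 1) ∧ αbar (s - 1) ≤ 1)) := by
    rintro s hs2 hsT ⟨ih1, ih2⟩
    rw [hrec s hs2 hsT]
    set a := αbar s with hadef
    constructor
    · rcases le_or_gt a 0 with ha | ha
      · nlinarith [mul_nonneg hc₁.le hL0,
          mul_nonpos_of_nonpos_of_nonneg ha (show (0:ℝ) ≤ 1 - a by linarith)]
      · rcases le_or_gt a 1 with ha1 | ha1
        · have e1 : a * (1 - a) ≤ 1 := by nlinarith
          have e2 : 0 ≤ a * (1 - a) := mul_nonneg ha.le (by linarith)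
          have e3 : c₁ * L * (a * (1 - a)) ≤ c₁ * (a * (1 - a)) := by
            have : c₁ * L ≤ c₁ := by nlinarith
            exact mul_le_mul_of_nonneg_right this e2
          have e4 : c₁ * (a * (1 - a)) ≤ c₁ * 1 := mul_le_mul_of_nonneg_left e1 hc₁.le
          nlinarith [e3, e4]
        · have e5 : 0 ≤ c₁ * L * a := mul_nonneg (mul_nonneg hc₁.le hL0) (by linarith)
          nlinarith [e5, mul_nonneg e5 (show (0:ℝ) ≤ a - 1 by linarith)]
    · intro hcl
      obtain ⟨h0, h1⟩ := ih2 hcl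
      constructor
      · nlinarith [mul_nonneg (mul_nonneg (mul_nonneg hc₁.le hL0) h0)
          (show (0:ℝ) ≤ 1 - a by linarith)]
      · nlinarith [mul_le_mul_of_nonneg_right hcl h0, sq_nonneg (1 - a),
          mul_nonneg (mul_nonneg hc₁.le hL0) h0]
  have main : ∀ n : ℕ, n < T →
      (αbar (T - n) ≤ 1 + c₁ ∧ (c₁ * L ≤ 1 → 0 ≤ αbar (T - n) ∧ αbar (T - n) ≤ 1)) := by
    intro n
    induction n with
    | zero =>
      intro _
      have hb1 : (T : ℝ) ^ (-c₀) ≤ 1 :=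
        Real.rpow_le_one_of_one_le_of_nonpos hT1 (by linarith)
      have hb0 : (0:ℝ) ≤ (T : ℝ) ^ (-c₀) := (Real.rpow_pos_of_pos hT0 _).le
      simp only [Nat.sub_zero, hbase]
      exact ⟨by linarith, fun _ => ⟨hb0, hb1⟩⟩
    | succ n ih =>
      intro hn
      have hn' : n < T := Nat.lt_of_succ_lt hn
      have ihn := ih hn'
      have hTn2 : 2 ≤ T - n := by omega
      have h1 : T - (n + 1) = (T - n) - 1 := by omega
      rw [h1]
      exact step (T - n) hTn2 (by omega) ihn
  intro t ht1 htT
  have h := main (T - t) (by omega)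
  rwa [Nat.sub_sub_self htT] at h


end helpers

set_option maxHeartbeats 2000000 in
/-- Lemma 6, claim (68). For every `t ∈ [T]`, the probability that
`X_t^GMM` falls outside the set `A_t` satisfies `P{X_t^GMM ∉ A_t} ≤ C exp(−2 d log T)`
for some absolute constant `C > 0`. -/
theorem stmt8 :
    ∀ cR : ℝ, 0 < cR →
      ∃ c₀₀ c₁₀ C₇₀ : ℝ, 0 < c₀₀ ∧ 0 < c₁₀ ∧ 0 < C₇₀ ∧
        ∀ c₀ c₁ C₇ : ℝ, c₀₀ ≤ c₀ → c₁₀ ≤ c₁ → C₇₀ ≤ C₇ → 4 < c₁ / c₀ →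
          ∃ C : ℝ, 0 < C ∧
            ∀ (d K T : ℕ), 1 ≤ d → 1 ≤ K → 1 ≤ T →
              ∀ (w : Fin K → ℝ) (μ : Fin K → EuclideanSpace ℝ (Fin d)),
                (∀ k, w k ∈ Set.Ioo (0 : ℝ) 1) → (∑ k, w k = 1) →
                (∀ k, ‖μ k‖ ≤ (T : ℝ) ^ cR) →
                ∀ (αbar α : ℕ → ℝ),
                  αbar T = (T : ℝ) ^ (-c₀) →
                  (∀ t : ℕ, 2 ≤ t → t ≤ T →
                    αbar (t - 1) = αbar t + c₁ * (Real.log T / T) * αbar t * (1 - αbar t)) →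
                  (∀ t : ℕ, 2 ≤ t → t ≤ T → α t = αbar t / αbar (t - 1)) →
                  α 1 = αbar 1 →
                  ∀ t : ℕ, 1 ≤ t → t ≤ T →
                    (∫ x in (Aset d K T w μ (αbar t) cR C₇)ᶜ,
                        mixDensity d K w μ (αbar t) x) ≤
                      C * Real.exp (-(2 * d * Real.log T)) := by
  intro cR hcR
  refine ⟨1, 1, cR + 10, one_pos, one_pos, by positivity, ?_⟩
  intro c₀ c₁ C₇ hc₀ hc₁ hC₇ _hratio
  have hc₀0 : 0 < c₀ := lt_of_lt_of_le one_pos hc₀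
  have hc₁0 : 0 < c₁ := lt_of_lt_of_le one_pos hc₁
  set B : ℝ := (2 * (1 + c₁)) ^ (2 * cR + 1) with hB
  have hB0 : 0 < B := Real.rpow_pos_of_pos (by linarith) _
  refine ⟨Real.exp (4 * B ^ 2) + 2, by positivity, ?_⟩
  intro d K T hd hK hT w μ hw hw1 hμ αbar α hbase hrec hα hα1 t ht1 htT
  have hw0 : ∀ k, 0 ≤ w k := fun k => (hw k).1.le
  have hpn : ∀ x, 0 ≤ mixDensity d K w μ (αbar t) x := mix_nonneg _ _ _ hw0
  have hpi := integrable_mix w μ (αbar t)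
  have hint1 := integral_mix w μ (αbar t) hw1
  have htriv : ∫ x in (Aset d K T w μ (αbar t) cR C₇)ᶜ, mixDensity d K w μ (αbar t) x ≤ 1 := by
    rw [← hint1]
    exact setIntegral_le_integral hpi (ae_of_all _ hpn)
  have hexpB := Real.exp_pos (4 * B ^ 2)
  rcases eq_or_lt_of_le hT with hT1 | hT2
  · -- T = 1
    rw [← hT1]
    simp only [Nat.cast_one, Real.log_one, mul_zero, neg_zero, Real.exp_zero, mul_one]
    rw [← hT1] at htriv
    linarith [htriv]
  · -- 2 ≤ T
    have hT2' : 2 ≤ T := hT2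
    have hT2R : (2:ℝ) ≤ T := by exact_mod_cast hT2'
    have hT0 : (0:ℝ) < T := by linarith
    have hlT0 : 0 < Real.log T := Real.log_pos (by linarith)
    have hab := alpha_bound T hT c₀ c₁ hc₀0 hc₁0 αbar hbase hrec t ht1 htT
    have hC7' : cR + 10 ≤ C₇ := hC₇
    have hfinal : ∀ X : ℝ, 0 ≤ X → 2 * Real.exp (-(X)) ≤
        (Real.exp (4 * B ^ 2) + 2) * Real.exp (-(X)) := by
      intro X _
      exact mul_le_mul_of_nonneg_right (by linarith) (Real.exp_pos _).le
    by_cases hcl : c₁ * (Real.log T / T) ≤ 1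
    · obtain ⟨h0, h1⟩ := hab.2 hcl
      have hmean : ∀ k, ‖Real.sqrt (αbar t) • μ k‖ + Real.sqrt (8 * d * Real.log T) ≤
          Real.sqrt (2 * (T : ℝ) ^ (2 * cR) + 16 * d * Real.log T) := by
        intro k
        have hs1 : Real.sqrt (αbar t) ≤ 1 := by
          rw [show (1:ℝ) = Real.sqrt 1 by simp]
          exact Real.sqrt_le_sqrt h1
        have hs1' : Real.sqrt (αbar t) ≤ 1 := by simpa using hs1
        have hnk : ‖Real.sqrt (αbar t) • μ k‖ ≤ (T:ℝ) ^ cR := by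
          rw [norm_smul, Real.norm_eq_abs, abs_of_nonneg (Real.sqrt_nonneg _)]
          calc Real.sqrt (αbar t) * ‖μ k‖ ≤ 1 * ((T:ℝ) ^ cR) :=
                mul_le_mul hs1' (hμ k) (norm_nonneg _) one_pos.le
            _ = (T:ℝ) ^ cR := one_mul _
        have key := add_sqrt_le ((T:ℝ) ^ cR) (8 * d * Real.log T)
          (Real.rpow_nonneg hT0.le _) (by positivity)
        have hrw : 2 * ((T:ℝ) ^ cR) ^ 2 + 2 * (8 * (d:ℝ) * Real.log T)
            = 2 * (T:ℝ) ^ (2 * cR) + 16 * d * Real.log T := by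
          have hh : ((T:ℝ) ^ cR) ^ 2 = (T:ℝ) ^ (2 * cR) := by
            rw [← Real.rpow_natCast ((T:ℝ) ^ cR) 2, ← Real.rpow_mul hT0.le]
            norm_num [mul_comm]
          rw [hh]; ring
        rw [hrw] at key
        linarith [key, hnk, Real.sqrt_nonneg (8 * (d:ℝ) * Real.log T)]
      refine le_trans (core_est d K T hd hT2' w μ hw0 hw1 (αbar t) cR C₇ hcR hC7' hmean) ?_
      exact hfinal _ (by positivity)
    · push_neg at hcl
      have hsT := Real.sqrt_pos.mpr hT0
      have hTc : (T:ℝ) < 4 * c₁ ^ 2 := by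
        have hlog2 : Real.log T ≤ 2 * Real.sqrt T - 2 := by
          have h := Real.log_le_sub_one_of_pos hsT
          rw [Real.log_sqrt hT0.le] at h
          linarith
        have h3 : (T:ℝ) < c₁ * Real.log T := by
          have h4 : 1 < (c₁ * Real.log T) / T := by rw [mul_div_assoc]; exact hcl
          exact (one_lt_div hT0).mp h4
        have h5 := Real.mul_self_sqrt hT0.le
        have h4' : Real.sqrt T * Real.sqrt T < 2 * c₁ * Real.sqrt T := by nlinarith
        have h6 : Real.sqrt T < 2 * c₁ := lt_of_mul_lt_mul_right h4' hsT.le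
        nlinarith [h5, h6, hsT]
      by_cases hBu : B + Real.sqrt (8 * d * Real.log T) ≤
          Real.sqrt (2 * (T : ℝ) ^ (2 * cR) + 16 * d * Real.log T)
      · have habar := hab.1
        have hmean : ∀ k, ‖Real.sqrt (αbar t) • μ k‖ + Real.sqrt (8 * d * Real.log T) ≤
            Real.sqrt (2 * (T : ℝ) ^ (2 * cR) + 16 * d * Real.log T) := by
          intro k
          have hs1 : Real.sqrt (αbar t) ≤ Real.sqrt (1 + c₁) := Real.sqrt_le_sqrt habar
          have hnk : ‖Real.sqrt (αbar t) • μ k‖ ≤ Real.sqrt (1 + c₁) * (T:ℝ) ^ cR := by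
            rw [norm_smul, Real.norm_eq_abs, abs_of_nonneg (Real.sqrt_nonneg _)]
            exact mul_le_mul hs1 (hμ k) (norm_nonneg _) (Real.sqrt_nonneg _)
          have hBb : Real.sqrt (1 + c₁) * (T:ℝ) ^ cR ≤ B := by
            have h1c : (0:ℝ) ≤ 1 + c₁ := by linarith
            have e1 : Real.sqrt (1 + c₁) ≤ 2 * (1 + c₁) := by
              nlinarith [Real.sq_sqrt h1c, Real.sqrt_nonneg (1 + c₁),
                sq_nonneg (Real.sqrt (1 + c₁) - 1)]
            have e2 : (T:ℝ) ^ cR ≤ (2 * (1 + c₁)) ^ (2 * cR) := by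
              have ha1 : (T:ℝ) ^ cR ≤ (4 * c₁ ^ 2) ^ cR :=
                Real.rpow_le_rpow hT0.le hTc.le hcR.le
              have ha2 : ((4:ℝ) * c₁ ^ 2) ^ cR = (2 * c₁) ^ (2 * cR) := by
                rw [show (4:ℝ) * c₁ ^ 2 = (2 * c₁) ^ (2:ℕ) by ring,
                  ← Real.rpow_natCast (2 * c₁) 2, ← Real.rpow_mul (by positivity)]
                norm_num
              have ha3 : ((2:ℝ) * c₁) ^ (2 * cR) ≤ (2 * (1 + c₁)) ^ (2 * cR) :=
                Real.rpow_le_rpow (by positivity) (by linarith) (by positivity)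
              rw [ha2] at ha1
              linarith
            calc Real.sqrt (1 + c₁) * (T:ℝ) ^ cR
                ≤ (2 * (1 + c₁)) * (2 * (1 + c₁)) ^ (2 * cR) :=
                  mul_le_mul e1 e2 (Real.rpow_nonneg hT0.le _) (by linarith)
              _ = B := by
                  rw [hB, Real.rpow_add (by linarith), Real.rpow_one]; ring
          linarith [hnk, hBb, hBu]
        refine le_trans (core_est d K T hd hT2' w μ hw0 hw1 (αbar t) cR C₇ hcR hC7' hmean) ?_
        exact hfinal _ (by positivity)
      · push_neg at hBu
        have hd1 : (1:ℝ) ≤ d := by exact_mod_cast hd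
        have hRge : Real.sqrt (16 * d * Real.log T) ≤
            Real.sqrt (2 * (T : ℝ) ^ (2 * cR) + 16 * d * Real.log T) := by
          apply Real.sqrt_le_sqrt
          nlinarith [Real.rpow_nonneg hT0.le (2 * cR)]
        have h16 : Real.sqrt (16 * (d:ℝ) * Real.log T)
            = Real.sqrt 2 * Real.sqrt (8 * d * Real.log T) := by
          rw [← Real.sqrt_mul (by norm_num : (0:ℝ) ≤ 2)]
          congr 1
          ring
        have hsqrt2 : (1.4:ℝ) ≤ Real.sqrt 2 :=
          (Real.le_sqrt (by norm_num) (by norm_num)).mpr (by norm_num)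
        set u := Real.sqrt (8 * d * Real.log T) with hu
        have hu0 : 0 ≤ u := Real.sqrt_nonneg _
        have hub : u < 2.5 * B := by nlinarith [hsqrt2, hBu, hRge, h16]
        have hdlt : (d:ℝ) * Real.log T < B ^ 2 := by
          have hsq : u ^ 2 = 8 * (d:ℝ) * Real.log T := Real.sq_sqrt (by positivity)
          nlinarith [hsq, hub, hu0, hB0]
        refine le_trans htriv ?_
        have hx : Real.exp (2 * d * Real.log T) ≤ Real.exp (4 * B ^ 2) :=
          Real.exp_le_exp.mpr (by nlinarith [hB0])
        calc (1:ℝ) = Real.exp (2 * d * Real.log T) * Real.exp (-(2 * d * Real.log T)) := by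
              rw [← Real.exp_add, show (2 * (d:ℝ) * Real.log T + -(2 * d * Real.log T)) = 0
                by ring, Real.exp_zero]
          _ ≤ (Real.exp (4 * B ^ 2) + 2) * Real.exp (-(2 * d * Real.log T)) :=
              mul_le_mul_of_nonneg_right (by linarith) (Real.exp_pos _).le
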